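/- The affine (1,1)-clans are exactly: the sequence with (c₁,c₂) = (+,−), the sequence with (c₁,c₂) = (−,+), and for each k ∈ ℤ the sequence determined by (c₁,c₂) = (1, 1+2k). In particular, the set of equivalence classes of affine (1,1)-clans is countably infinite, in bijection with ℤ ⊔ {two points}. -/

import Mathlib

noncomputable section

/-- An entry of a clan: `Sum.inl m` is the integer label `m`, `Sum.inr true` is `+`,
and `Sum.inr false` is `−`. -/
abbrev ClanEntry := ℤ ⊕ Bool

/-- An affine `(p,q)`-clan. -/
def IsAffineClan (p q : ℕ) (c : ℤ → ClanEntry) : Prop :=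
  (∀ i k m : ℤ, c i = Sum.inl m → c (i + k * (p + q)) = Sum.inl (m + k * (p + q))) ∧
  (∀ (i : ℤ) (s : Bool), c i = Sum.inr s → c (i + (p + q)) = Sum.inr s) ∧
  ((((Finset.Icc (1 : ℤ) (p + q)).filter fun i => c i = Sum.inr true).card : ℤ) -
      (((Finset.Icc (1 : ℤ) (p + q)).filter fun i => c i = Sum.inr false).card : ℤ) =
    (p : ℤ) - (q : ℤ)) ∧
  (∀ m i : ℤ, c i = Sum.inl m →
    ∃ j : ℤ, j ≠ i ∧ c j = Sum.inl m ∧ ∀ k : ℤ, c k = Sum.inl m → k = i ∨ k = j)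

/-- Equivalence of clans: same positions of `+`, same positions of `−`, and the same
pairs of positions carrying equal integer labels. -/
def ClanEquiv (c d : ℤ → ClanEntry) : Prop :=
  (∀ i, c i = Sum.inr true ↔ d i = Sum.inr true) ∧
  (∀ i, c i = Sum.inr false ↔ d i = Sum.inr false) ∧
  (∀ i j, i ≠ j →
    ((∃ m, c i = Sum.inl m ∧ c j = Sum.inl m) ↔ (∃ m, d i = Sum.inl m ∧ d j = Sum.inl m)))

/-- The affine `(1,1)`-clan with `(c₁, c₂) = (+, −)`. -/
def clanPM : ℤ → ClanEntry := fun i => if i % 2 = 1 then Sum.inr true else Sum.inr false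

/-- The affine `(1,1)`-clan with `(c₁, c₂) = (−, +)`. -/
def clanMP : ℤ → ClanEntry := fun i => if i % 2 = 1 then Sum.inr false else Sum.inr true

/-- The affine `(1,1)`-clan with `(c₁, c₂) = (1, 1 + 2k)`. -/
def clanZ (k : ℤ) : ℤ → ClanEntry :=
  fun i => if i % 2 = 1 then Sum.inl i else Sum.inl (i - 1 + 2 * k)

def Fsh : ClanEntry → ℤ → ClanEntry
  | Sum.inl m, d => Sum.inl (m + d)
  | Sum.inr s, _ => Sum.inr s

lemma Fsh_zero (e : ClanEntry) : Fsh e 0 = e := by cases e <;> simp [Fsh]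

lemma Fsh_comp (e : ClanEntry) (a b : ℤ) : Fsh (Fsh e a) b = Fsh e (a + b) := by
  cases e <;> simp [Fsh] <;> ring

lemma clan_step (c : ℤ → ClanEntry) (h : IsAffineClan 1 1 c) (i : ℤ) :
    c (i + 2) = Fsh (c i) 2 := by
  cases hc : c i with
  | inl m =>
      have := h.1 i 1 m hc
      norm_num at this
      simpa [Fsh] using this
  | inr s =>
      have := h.2.1 i s hc
      norm_num at this
      simpa [Fsh] using this

lemma clan_back (c : ℤ → ClanEntry) (h : IsAffineClan 1 1 c) (i : ℤ) :
    c (i - 2) = Fsh (c i) (-2) := by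
  have hs := clan_step c h (i - 2)
  rw [show i - 2 + 2 = i by ring] at hs
  cases hd : c (i - 2) with
  | inl m => rw [hd] at hs; rw [hs]; simp [Fsh]
  | inr s => rw [hd] at hs; rw [hs]; simp [Fsh]

lemma clan_shift (c : ℤ → ClanEntry) (h : IsAffineClan 1 1 c) (i k : ℤ) :
    c (i + 2 * k) = Fsh (c i) (2 * k) := by
  induction k using Int.induction_on with
  | zero => rw [mul_zero, add_zero, Fsh_zero]
  | succ n ih =>
      rw [show i + 2 * ((n : ℤ) + 1) = (i + 2 * n) + 2 by ring, clan_step c h, ih, Fsh_comp]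
      congr 1 <;> ring
  | pred n ih =>
      rw [show i + 2 * (-(n : ℤ) - 1) = (i + 2 * (-n)) - 2 by ring, clan_back c h, ih, Fsh_comp]
      congr 1 <;> ring

lemma clan_eval (c : ℤ → ClanEntry) (h : IsAffineClan 1 1 c) (i : ℤ) :
    c i = if i % 2 = 1 then Fsh (c 1) (i - 1) else Fsh (c 2) (i - 2) := by
  by_cases hp : i % 2 = 1
  · have h1 : i = 1 + 2 * ((i - 1) / 2) := by omega
    rw [hp]; simp only [if_true]
    rw [show i = 1 + 2 * ((i - 1) / 2) from h1, clan_shift c h]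
    congr 1; omega
  · have h1 : i = 2 + 2 * ((i - 2) / 2) := by omega
    simp only [hp, if_false]
    rw [show i = 2 + 2 * ((i - 2) / 2) from h1, clan_shift c h]
    congr 1; omega

lemma Icc12 : Finset.Icc (1 : ℤ) (((1:ℕ):ℤ) + ((1:ℕ):ℤ)) = {1, 2} := by
  norm_num
  ext x
  simp [Finset.mem_Icc]
  omega

lemma isClanPM : IsAffineClan 1 1 clanPM := by
  refine ⟨?_, ?_, ?_, ?_⟩
  · intro i k m h
    unfold clanPM at h; split at h <;> simp at h
  · intro i s h
    unfold clanPM at h ⊢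
    have : (i + (((1:ℕ):ℤ) + ((1:ℕ):ℤ))) % 2 = i % 2 := by push_cast; omega
    rw [this]; exact h
  · rw [Icc12]
    norm_num [Finset.filter_insert, Finset.filter_singleton, clanPM]
  · intro m i h
    unfold clanPM at h; split at h <;> simp at h

lemma isClanMP : IsAffineClan 1 1 clanMP := by
  refine ⟨?_, ?_, ?_, ?_⟩
  · intro i k m h
    unfold clanMP at h; split at h <;> simp at h
  · intro i s h
    unfold clanMP at h ⊢
    have : (i + (((1:ℕ):ℤ) + ((1:ℕ):ℤ))) % 2 = i % 2 := by push_cast; omega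
    rw [this]; exact h
  · rw [Icc12]
    norm_num [Finset.filter_insert, Finset.filter_singleton, clanMP]
  · intro m i h
    unfold clanMP at h; split at h <;> simp at h

lemma isClanZ (k : ℤ) : IsAffineClan 1 1 (clanZ k) := by
  refine ⟨?_, ?_, ?_, ?_⟩
  · intro i t m h
    unfold clanZ at h ⊢
    have h2 : (((1:ℕ):ℤ) + ((1:ℕ):ℤ)) = 2 := by norm_num
    rw [h2]
    have : (i + t * 2) % 2 = i % 2 := by omega
    rw [this]
    split at h <;> split <;> simp_all <;> omega
  · intro i s h
    unfold clanZ at h; split at h <;> simp at h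
  · rw [Icc12]
    norm_num [Finset.filter_insert, Finset.filter_singleton]
    simp [clanZ]
  · intro m i h
    unfold clanZ at h
    by_cases hp : i % 2 = 1
    · rw [if_pos hp] at h
      obtain rfl : i = m := by simpa using h
      refine ⟨i + 1 - 2 * k, by omega, ?_, ?_⟩
      · unfold clanZ
        rw [if_neg (by omega)]
        congr 1; ring
      · intro j hj
        unfold clanZ at hj
        split at hj <;> simp at hj <;> omega
    · rw [if_neg hp] at h
      obtain rfl : i - 1 + 2 * k = m := by simpa using h
      refine ⟨i - 1 + 2 * k, by omega, ?_, ?_⟩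
      · unfold clanZ
        rw [if_pos (by omega)]
      · intro j hj
        unfold clanZ at hj
        split at hj <;> simp at hj <;> omega

lemma classify (c : ℤ → ClanEntry) (h : IsAffineClan 1 1 c) :
    ClanEquiv c clanPM ∨ ClanEquiv c clanMP ∨ ∃ k : ℤ, ClanEquiv c (clanZ k) := by
  have hbal := h.2.2.1
  rw [Icc12] at hbal
  simp only [Finset.filter_insert, Finset.filter_singleton] at hbal
  rcases hc1 : c 1 with m1 | s1 <;> rcases hc2 : c 2 with m2 | s2
  · -- both integers
    right; right
    obtain ⟨j, hj1, hjm, -⟩ := h.2.2.2 m1 1 hc1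
    have hj := clan_eval c h j
    rw [hc1, hc2, hjm] at hj
    by_cases hp : j % 2 = 1
    · rw [if_pos hp] at hj
      simp [Fsh] at hj
      omega
    · rw [if_neg hp] at hj
      simp [Fsh] at hj
      -- hj : m1 = m2 + (j - 2)
      obtain ⟨t, ht⟩ : ∃ t, m2 - m1 = 2 * t := ⟨(m2 - m1) / 2, by omega⟩
      refine ⟨t, ?_, ?_, ?_⟩
      · intro i
        rw [clan_eval c h i, hc1, hc2]
        unfold clanZ
        split <;> simp [Fsh]
      · intro i
        rw [clan_eval c h i, hc1, hc2]
        unfold clanZ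
        split <;> simp [Fsh]
      · intro i j' hij
        rw [clan_eval c h i, clan_eval c h j', hc1, hc2]
        unfold clanZ
        by_cases hi : i % 2 = 1 <;> by_cases hj' : j' % 2 = 1 <;>
          simp [hi, hj', Fsh, Sum.inl.injEq, exists_eq_left] <;> omega
  · -- c1 integer, c2 sign: balance fails
    exfalso
    rcases s2 <;> simp [hc1, hc2] at hbal
  · exfalso
    rcases s1 <;> simp [hc1, hc2] at hbal
  · -- both signs
    rcases s1 <;> rcases s2
    · exfalso; simp [hc1, hc2] at hbal
    · right; left
      refine ⟨?_, ?_, ?_⟩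
      · intro i
        rw [clan_eval c h i, hc1, hc2]
        unfold clanMP
        split <;> simp [Fsh]
      · intro i
        rw [clan_eval c h i, hc1, hc2]
        unfold clanMP
        split <;> simp [Fsh]
      · intro i j hij
        rw [clan_eval c h i, clan_eval c h j, hc1, hc2]
        unfold clanMP
        constructor <;> rintro ⟨m, hm, -⟩ <;> revert hm <;> split <;> simp [Fsh]
    · left
      refine ⟨?_, ?_, ?_⟩
      · intro i
        rw [clan_eval c h i, hc1, hc2]
        unfold clanPM
        split <;> simp [Fsh]
      · intro i
        rw [clan_eval c h i, hc1, hc2]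
        unfold clanPM
        split <;> simp [Fsh]
      · intro i j hij
        rw [clan_eval c h i, clan_eval c h j, hc1, hc2]
        unfold clanPM
        constructor <;> rintro ⟨m, hm, -⟩ <;> revert hm <;> split <;> simp [Fsh]
    · exfalso; simp [hc1, hc2] at hbal

lemma aux_PM1 : clanPM 1 = Sum.inr true := by norm_num [clanPM]
lemma aux_MP1 : clanMP 1 = Sum.inr false := by norm_num [clanMP]
lemma aux_Z1 (k : ℤ) : clanZ k 1 = Sum.inl 1 := by norm_num [clanZ]

lemma not_equiv_PM_MP : ¬ ClanEquiv clanPM clanMP := by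
  rintro ⟨h1, -, -⟩
  have := (h1 1).mp aux_PM1
  rw [aux_MP1] at this
  simp at this

lemma not_equiv_PM_Z (k : ℤ) : ¬ ClanEquiv clanPM (clanZ k) := by
  rintro ⟨h1, -, -⟩
  have := (h1 1).mp aux_PM1
  rw [aux_Z1] at this
  simp at this

lemma not_equiv_MP_Z (k : ℤ) : ¬ ClanEquiv clanMP (clanZ k) := by
  rintro ⟨-, h2, -⟩
  have := (h2 1).mp aux_MP1
  rw [aux_Z1] at this
  simp at this

lemma equiv_Z_inj (k k' : ℤ) (h : ClanEquiv (clanZ k) (clanZ k')) : k = k' := by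
  obtain ⟨-, -, h3⟩ := h
  have hne : (1 : ℤ) ≠ 2 - 2 * k := by omega
  have hL : ∃ m, clanZ k 1 = Sum.inl m ∧ clanZ k (2 - 2 * k) = Sum.inl m := by
    refine ⟨1, aux_Z1 k, ?_⟩
    unfold clanZ
    rw [if_neg (by omega)]
    congr 1; ring
  obtain ⟨m, hm1, hm2⟩ := (h3 1 (2 - 2 * k) hne).mp hL
  rw [aux_Z1] at hm1
  obtain rfl : (1 : ℤ) = m := by simpa using hm1
  unfold clanZ at hm2
  rw [if_neg (by omega)] at hm2
  simp at hm2
  omega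

/-- The affine `(1,1)`-clans are exactly `(+,−)`, `(−,+)`, and
`(1, 1+2k)` for `k ∈ ℤ`, and these are pairwise inequivalent; so the set of
equivalence classes is in bijection with `ℤ ⊔ {two points}` (countably infinite). -/
theorem affine_one_one_clan_classification :
    (IsAffineClan 1 1 clanPM ∧ IsAffineClan 1 1 clanMP ∧ ∀ k : ℤ, IsAffineClan 1 1 (clanZ k)) ∧
    (∀ c : ℤ → ClanEntry, IsAffineClan 1 1 c →
      ClanEquiv c clanPM ∨ ClanEquiv c clanMP ∨ ∃ k : ℤ, ClanEquiv c (clanZ k)) ∧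
    ¬ ClanEquiv clanPM clanMP ∧
    (∀ k : ℤ, ¬ ClanEquiv clanPM (clanZ k)) ∧
    (∀ k : ℤ, ¬ ClanEquiv clanMP (clanZ k)) ∧
    (∀ k k' : ℤ, ClanEquiv (clanZ k) (clanZ k') → k = k') :=
  ⟨⟨isClanPM, isClanMP, isClanZ⟩, classify, not_equiv_PM_MP, not_equiv_PM_Z,
    not_equiv_MP_Z, equiv_Z_inj⟩
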